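/- Semiring laws up to equivalence: for all interpretation terms s, t, u of the same type σ, s ⊕ t ≈ t ⊕ s, s ⊗ t ≈ t ⊗ s, s ⊕ (t ⊕ u) ≈ (s ⊕ t) ⊕ u, s ⊗ (t ⊗ u) ≈ (s ⊗ t) ⊗ u, s ⊗ (t ⊕ u) ≈ (s ⊗ t) ⊕ (s ⊗ u), lift_σ(0) ⊕ s ≈ s, and lift_σ(1) ⊗ s ≈ s, where ≈ is the intersection of ⪰ with its converse. -/

import Mathlib

/-- Kinds: `κ ::= * | κ ⇒ κ`. -/
inductive Kind : Type
  | star : Kind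
  | arr : Kind → Kind → Kind

/-- Closed β-normal interpretation types over a family `Con κ` of closed type
constructors of each kind: the base type `nat`, arrow types, and universal
types (a universal type is given by its instantiation function `Con κ → ITy`). -/
inductive ITy (Con : Kind → Type) : Type
  | nat : ITy Con
  | arrow : ITy Con → ITy Con → ITy Con
  | all : (κ : Kind) → (Con κ → ITy Con) → ITy Con

/-- The defining (coinductive unfolding) clauses of the typewise ordering with
base comparison `P` of natural-number normal forms at type `nat`:
pointwise over closed normal term arguments at arrow types, and pointwise over
closed type constructors at universal types. -/
def Unfolds {Con : Kind → Type} {Tm : Type}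
    (app : Tm → Tm → Tm) (tapp : (κ : Kind) → Tm → Con κ → Tm)
    (Normal : ITy Con → Tm → Prop) (nf : Tm → ℕ)
    (P : ℕ → ℕ → Prop) (R : ITy Con → Tm → Tm → Prop) : Prop :=
  (∀ s t, R ITy.nat s t ↔ P (nf s) (nf t)) ∧
  (∀ a b s t, R (ITy.arrow a b) s t ↔ ∀ q, Normal a q → R b (app s q) (app t q)) ∧
  (∀ (κ : Kind) (body : Con κ → ITy Con) s t,
    R (ITy.all κ body) s t ↔ ∀ ρ : Con κ, R (body ρ) (tapp κ s ρ) (tapp κ t ρ))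

/-- The interpretation calculus: closed interpretation terms with application,
type application, natural number literals and normal forms, the polymorphic
operations `⊕`, `⊗`, `lift`, `flatten`, a reduction relation `⇝` satisfying
the type-directed rules, and the coinductive typewise orderings `≻`, `⪰`. -/
structure InterpCalc (Con : Kind → Type) (Tm : Type) where
  app : Tm → Tm → Tm
  tapp : (κ : Kind) → Tm → Con κ → Tm
  Normal : ITy Con → Tm → Prop
  HasType : ITy Con → Tm → Prop
  nf : Tm → ℕ
  lit : ℕ → Tm
  plus : ITy Con → Tm → Tm → Tm
  times : ITy Con → Tm → Tm → Tm
  lift : ITy Con → Tm → Tm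
  flatten : ITy Con → Tm → Tm
  chi : (κ : Kind) → Con κ
  Red : Tm → Tm → Prop
  succ : ITy Con → Tm → Tm → Prop
  wsucc : ITy Con → Tm → Tm → Prop
  /-- `≻` satisfies the coinductive unfolding clauses with base comparison `>`. -/
  succ_unfold : Unfolds app tapp Normal nf (· > ·) succ
  /-- `⪰` satisfies the coinductive unfolding clauses with base comparison `≥`. -/
  wsucc_unfold : Unfolds app tapp Normal nf (· ≥ ·) wsucc
  /-- Reduction preserves (unique) normal forms. -/
  nf_red : ∀ s t, Red s t → nf s = nf t
  nf_lit : ∀ n, nf (lit n) = n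
  red_app_left : ∀ s s' t, Red s s' → Red (app s t) (app s' t)
  red_app_right : ∀ s t t', Red t t' → Red (app s t) (app s t')
  red_tapp : ∀ (κ : Kind) s s' (ρ : Con κ), Red s s' → Red (tapp κ s ρ) (tapp κ s' ρ)
  /-- `⊕_nat n m ⇝ n + m` (on normal forms). -/
  nf_plus_nat : ∀ s t, nf (plus ITy.nat s t) = nf s + nf t
  /-- `⊗_nat n m ⇝ n · m` (on normal forms). -/
  nf_times_nat : ∀ s t, nf (times ITy.nat s t) = nf s * nf t
  /-- `lift_nat s ⇝ s`. -/
  nf_lift_nat : ∀ s, nf (lift ITy.nat s) = nf s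
  /-- `flatten_nat s ⇝ s`. -/
  nf_flatten_nat : ∀ s, nf (flatten ITy.nat s) = nf s
  /-- `(s ⊕_{σ→τ} t)·q ⇝* (s·q) ⊕_τ (t·q)`. -/
  red_plus_arrow : ∀ a b s t q,
    Relation.ReflTransGen Red (app (plus (ITy.arrow a b) s t) q)
      (plus b (app s q) (app t q))
  /-- `(s ⊕_{∀α.σ} t)·ρ ⇝* (s·ρ) ⊕ (t·ρ)`. -/
  red_plus_all : ∀ (κ : Kind) (body : Con κ → ITy Con) s t (ρ : Con κ),
    Relation.ReflTransGen Red (tapp κ (plus (ITy.all κ body) s t) ρ)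
      (plus (body ρ) (tapp κ s ρ) (tapp κ t ρ))
  /-- `(s ⊗_{σ→τ} t)·q ⇝* (s·q) ⊗_τ (t·q)`. -/
  red_times_arrow : ∀ a b s t q,
    Relation.ReflTransGen Red (app (times (ITy.arrow a b) s t) q)
      (times b (app s q) (app t q))
  /-- `(s ⊗_{∀α.σ} t)·ρ ⇝* (s·ρ) ⊗ (t·ρ)`. -/
  red_times_all : ∀ (κ : Kind) (body : Con κ → ITy Con) s t (ρ : Con κ),
    Relation.ReflTransGen Red (tapp κ (times (ITy.all κ body) s t) ρ)
      (times (body ρ) (tapp κ s ρ) (tapp κ t ρ))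
  /-- `lift_{σ→τ}(n)·q ⇝* lift_τ(n)`. -/
  red_lift_arrow : ∀ a b n q,
    Relation.ReflTransGen Red (app (lift (ITy.arrow a b) n) q) (lift b n)
  /-- `lift_{∀α.σ}(n)·ρ ⇝* lift_σ(n)`. -/
  red_lift_all : ∀ (κ : Kind) (body : Con κ → ITy Con) n (ρ : Con κ),
    Relation.ReflTransGen Red (tapp κ (lift (ITy.all κ body) n) ρ) (lift (body ρ) n)
  /-- `flatten_{σ→τ}(s) ⇝* flatten_τ(s·lift_σ(0))`. -/
  red_flatten_arrow : ∀ a b s,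
    Relation.ReflTransGen Red (flatten (ITy.arrow a b) s)
      (flatten b (app s (lift a (lit 0))))
  /-- `flatten_{∀(α:κ).σ}(s) ⇝* flatten_{σ[α:=χ_κ]}(s·χ_κ)`. -/
  red_flatten_all : ∀ (κ : Kind) (body : Con κ → ITy Con) s,
    Relation.ReflTransGen Red (flatten (ITy.all κ body) s)
      (flatten (body (chi κ)) (tapp κ s (chi κ)))

/-- `≈`: mutual weak comparison. -/
def InterpCalc.Equiv {Con : Kind → Type} {Tm : Type} (C : InterpCalc Con Tm)
    (σ : ITy Con) (s t : Tm) : Prop :=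
  C.wsucc σ s t ∧ C.wsucc σ t s

namespace SemiringAux

open Relation

variable {Con : Kind → Type} {Tm : Type} (C : InterpCalc Con Tm)

lemma nf_reds {s t : Tm} (h : Relation.ReflTransGen C.Red s t) : C.nf s = C.nf t := by
  induction h with
  | refl => rfl
  | tail _ hst ih => exact ih.trans (C.nf_red _ _ hst)

lemma reds_app_left {s s' : Tm} (q : Tm) (h : Relation.ReflTransGen C.Red s s') :
    Relation.ReflTransGen C.Red (C.app s q) (C.app s' q) :=
  Relation.ReflTransGen.lift (fun x => C.app x q) (fun _ _ hr => C.red_app_left _ _ _ hr) _ _ h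

lemma reds_tapp {κ : Kind} {s s' : Tm} (ρ : Con κ) (h : Relation.ReflTransGen C.Red s s') :
    Relation.ReflTransGen C.Red (C.tapp κ s ρ) (C.tapp κ s' ρ) :=
  Relation.ReflTransGen.lift (fun x => C.tapp κ x ρ) (fun _ _ hr => C.red_tapp _ _ _ _ hr) _ _ h

lemma wsucc_inv : ∀ (σ : ITy Con) (s s' t t' : Tm),
    Relation.ReflTransGen C.Red s s' → Relation.ReflTransGen C.Red t t' →
    (C.wsucc σ s t ↔ C.wsucc σ s' t') := by
  intro σ
  induction σ with
  | nat =>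
    intro s s' t t' hs ht
    rw [C.wsucc_unfold.1, C.wsucc_unfold.1, nf_reds C hs, nf_reds C ht]
  | arrow a b _ ihb =>
    intro s s' t t' hs ht
    rw [C.wsucc_unfold.2.1, C.wsucc_unfold.2.1]
    constructor <;> intro h q hq
    · exact (ihb _ _ _ _ (reds_app_left C q hs) (reds_app_left C q ht)).mp (h q hq)
    · exact (ihb _ _ _ _ (reds_app_left C q hs) (reds_app_left C q ht)).mpr (h q hq)
  | all κ body ih =>
    intro s s' t t' hs ht
    rw [C.wsucc_unfold.2.2, C.wsucc_unfold.2.2]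
    constructor <;> intro h ρ
    · exact (ih ρ _ _ _ _ (reds_tapp C ρ hs) (reds_tapp C ρ ht)).mp (h ρ)
    · exact (ih ρ _ _ _ _ (reds_tapp C ρ hs) (reds_tapp C ρ ht)).mpr (h ρ)

lemma wsucc_refl : ∀ (σ : ITy Con) (s : Tm), C.wsucc σ s s := by
  intro σ
  induction σ with
  | nat => intro s; rw [C.wsucc_unfold.1]
  | arrow a b _ ihb => intro s; rw [C.wsucc_unfold.2.1]; intro q _; exact ihb _
  | all κ body ih => intro s; rw [C.wsucc_unfold.2.2]; intro ρ; exact ih ρ _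

lemma wsucc_trans : ∀ (σ : ITy Con) (s t u : Tm),
    C.wsucc σ s t → C.wsucc σ t u → C.wsucc σ s u := by
  intro σ
  induction σ with
  | nat =>
    intro s t u h1 h2
    rw [C.wsucc_unfold.1] at *
    omega
  | arrow a b _ ihb =>
    intro s t u h1 h2
    rw [C.wsucc_unfold.2.1] at *
    intro q hq
    exact ihb _ _ _ (h1 q hq) (h2 q hq)
  | all κ body ih =>
    intro s t u h1 h2
    rw [C.wsucc_unfold.2.2] at *
    intro ρ
    exact ih ρ _ _ _ (h1 ρ) (h2 ρ)

lemma equiv_of_reds {σ : ITy Con} {s t : Tm} (h : Relation.ReflTransGen C.Red s t) :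
    C.Equiv σ s t :=
  ⟨(wsucc_inv C σ s t t t h .refl).mpr (wsucc_refl C σ t),
   (wsucc_inv C σ t t s t .refl h).mpr (wsucc_refl C σ t)⟩

lemma equiv_refl (σ : ITy Con) (s : Tm) : C.Equiv σ s s :=
  ⟨wsucc_refl C σ s, wsucc_refl C σ s⟩

lemma equiv_symm {σ : ITy Con} {s t : Tm} (h : C.Equiv σ s t) : C.Equiv σ t s :=
  ⟨h.2, h.1⟩

lemma equiv_trans {σ : ITy Con} {s t u : Tm}
    (h1 : C.Equiv σ s t) (h2 : C.Equiv σ t u) : C.Equiv σ s u :=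
  ⟨wsucc_trans C σ _ _ _ h1.1 h2.1, wsucc_trans C σ _ _ _ h2.2 h1.2⟩

lemma plus_mono : ∀ (σ : ITy Con) (s s' t t' : Tm),
    C.wsucc σ s s' → C.wsucc σ t t' → C.wsucc σ (C.plus σ s t) (C.plus σ s' t') := by
  intro σ
  induction σ with
  | nat =>
    intro s s' t t' h1 h2
    rw [C.wsucc_unfold.1] at *
    rw [C.nf_plus_nat, C.nf_plus_nat]
    omega
  | arrow a b _ ihb =>
    intro s s' t t' h1 h2
    rw [C.wsucc_unfold.2.1] at h1 h2
    rw [C.wsucc_unfold.2.1]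
    intro q hq
    refine (wsucc_inv C b _ _ _ _ (C.red_plus_arrow a b s t q)
      (C.red_plus_arrow a b s' t' q)).mpr ?_
    exact ihb _ _ _ _ (h1 q hq) (h2 q hq)
  | all κ body ih =>
    intro s s' t t' h1 h2
    rw [C.wsucc_unfold.2.2] at h1 h2
    rw [C.wsucc_unfold.2.2]
    intro ρ
    refine (wsucc_inv C _ _ _ _ _ (C.red_plus_all κ body s t ρ)
      (C.red_plus_all κ body s' t' ρ)).mpr ?_
    exact ih ρ _ _ _ _ (h1 ρ) (h2 ρ)

lemma times_mono : ∀ (σ : ITy Con) (s s' t t' : Tm),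
    C.wsucc σ s s' → C.wsucc σ t t' → C.wsucc σ (C.times σ s t) (C.times σ s' t') := by
  intro σ
  induction σ with
  | nat =>
    intro s s' t t' h1 h2
    rw [C.wsucc_unfold.1] at *
    rw [C.nf_times_nat, C.nf_times_nat]
    exact Nat.mul_le_mul h1 h2
  | arrow a b _ ihb =>
    intro s s' t t' h1 h2
    rw [C.wsucc_unfold.2.1] at h1 h2
    rw [C.wsucc_unfold.2.1]
    intro q hq
    refine (wsucc_inv C b _ _ _ _ (C.red_times_arrow a b s t q)
      (C.red_times_arrow a b s' t' q)).mpr ?_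
    exact ihb _ _ _ _ (h1 q hq) (h2 q hq)
  | all κ body ih =>
    intro s s' t t' h1 h2
    rw [C.wsucc_unfold.2.2] at h1 h2
    rw [C.wsucc_unfold.2.2]
    intro ρ
    refine (wsucc_inv C _ _ _ _ _ (C.red_times_all κ body s t ρ)
      (C.red_times_all κ body s' t' ρ)).mpr ?_
    exact ih ρ _ _ _ _ (h1 ρ) (h2 ρ)

lemma plus_congr {σ : ITy Con} {s s' t t' : Tm}
    (h1 : C.Equiv σ s s') (h2 : C.Equiv σ t t') :
    C.Equiv σ (C.plus σ s t) (C.plus σ s' t') :=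
  ⟨plus_mono C σ _ _ _ _ h1.1 h2.1, plus_mono C σ _ _ _ _ h1.2 h2.2⟩

lemma times_congr {σ : ITy Con} {s s' t t' : Tm}
    (h1 : C.Equiv σ s s') (h2 : C.Equiv σ t t') :
    C.Equiv σ (C.times σ s t) (C.times σ s' t') :=
  ⟨times_mono C σ _ _ _ _ h1.1 h2.1, times_mono C σ _ _ _ _ h1.2 h2.2⟩

/-- Expressions in three variables over the semiring signature. -/
inductive Expr : Type
  | var : Fin 3 → Expr
  | add : Expr → Expr → Expr
  | mul : Expr → Expr → Expr
  | num : ℕ → Expr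

/-- Denotation of an expression as an interpretation term at type `σ`. -/
def denote (σ : ITy Con) (env : Fin 3 → Tm) : Expr → Tm
  | .var i => env i
  | .add e f => C.plus σ (denote σ env e) (denote σ env f)
  | .mul e f => C.times σ (denote σ env e) (denote σ env f)
  | .num n => C.lift σ (C.lit n)

/-- Numeric evaluation of an expression. -/
def evalE (ν : Fin 3 → ℕ) : Expr → ℕ
  | .var i => ν i
  | .add e f => evalE ν e + evalE ν f
  | .mul e f => evalE ν e * evalE ν f
  | .num n => n

lemma nf_denote_nat (env : Fin 3 → Tm) : ∀ e : Expr,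
    C.nf (denote C ITy.nat env e) = evalE (fun i => C.nf (env i)) e := by
  intro e
  induction e with
  | var i => rfl
  | add e f ihe ihf => simp [denote, evalE, C.nf_plus_nat, ihe, ihf]
  | mul e f ihe ihf => simp [denote, evalE, C.nf_times_nat, ihe, ihf]
  | num n => simp [denote, evalE, C.nf_lift_nat, C.nf_lit]

lemma denote_app (a b : ITy Con) (env : Fin 3 → Tm) (q : Tm) : ∀ e : Expr,
    C.Equiv b (C.app (denote C (ITy.arrow a b) env e) q)
      (denote C b (fun i => C.app (env i) q) e) := by
  intro e
  induction e with
  | var i => exact equiv_refl C b _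
  | add e f ihe ihf =>
    exact equiv_trans C (equiv_of_reds C (C.red_plus_arrow a b _ _ q))
      (plus_congr C ihe ihf)
  | mul e f ihe ihf =>
    exact equiv_trans C (equiv_of_reds C (C.red_times_arrow a b _ _ q))
      (times_congr C ihe ihf)
  | num n => exact equiv_of_reds C (C.red_lift_arrow a b _ q)

lemma denote_tapp (κ : Kind) (body : Con κ → ITy Con) (env : Fin 3 → Tm) (ρ : Con κ) :
    ∀ e : Expr,
    C.Equiv (body ρ) (C.tapp κ (denote C (ITy.all κ body) env e) ρ)
      (denote C (body ρ) (fun i => C.tapp κ (env i) ρ) e) := by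
  intro e
  induction e with
  | var i => exact equiv_refl C _ _
  | add e f ihe ihf =>
    exact equiv_trans C (equiv_of_reds C (C.red_plus_all κ body _ _ ρ))
      (plus_congr C ihe ihf)
  | mul e f ihe ihf =>
    exact equiv_trans C (equiv_of_reds C (C.red_times_all κ body _ _ ρ))
      (times_congr C ihe ihf)
  | num n => exact equiv_of_reds C (C.red_lift_all κ body _ ρ)

/-- Master lemma: any equation between expressions valid in `ℕ` holds up to
`≈` at every type. -/
lemma master (e1 e2 : Expr) (h : ∀ ν : Fin 3 → ℕ, evalE ν e1 = evalE ν e2) :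
    ∀ (σ : ITy Con) (env : Fin 3 → Tm),
      C.Equiv σ (denote C σ env e1) (denote C σ env e2) := by
  intro σ
  induction σ with
  | nat =>
    intro env
    constructor <;>
      · rw [C.wsucc_unfold.1, nf_denote_nat, nf_denote_nat, h]
  | arrow a b _ ihb =>
    intro env
    have key : ∀ q, C.Normal a q →
        C.Equiv b (C.app (denote C (ITy.arrow a b) env e1) q)
          (C.app (denote C (ITy.arrow a b) env e2) q) := by
      intro q _
      exact equiv_trans C (denote_app C a b env q e1)
        (equiv_trans C (ihb (fun i => C.app (env i) q))
          (equiv_symm C (denote_app C a b env q e2)))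
    constructor <;> rw [C.wsucc_unfold.2.1] <;> intro q hq
    · exact (key q hq).1
    · exact (key q hq).2
  | all κ body ih =>
    intro env
    have key : ∀ ρ : Con κ,
        C.Equiv (body ρ) (C.tapp κ (denote C (ITy.all κ body) env e1) ρ)
          (C.tapp κ (denote C (ITy.all κ body) env e2) ρ) := by
      intro ρ
      exact equiv_trans C (denote_tapp C κ body env ρ e1)
        (equiv_trans C (ih ρ (fun i => C.tapp κ (env i) ρ))
          (equiv_symm C (denote_tapp C κ body env ρ e2)))
    constructor <;> rw [C.wsucc_unfold.2.2] <;> intro ρ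
    · exact (key ρ).1
    · exact (key ρ).2

end SemiringAux

/-- Semiring laws up to `≈` for the interpretation operations `⊕`, `⊗`,
`lift`: commutativity, associativity, distributivity and neutrality of
`lift 0` and `lift 1`. -/
theorem semiring_laws_up_to_equiv
    {Con : Kind → Type} {Tm : Type} (C : InterpCalc Con Tm) :
    ∀ (σ : ITy Con) (s t u : Tm),
      C.HasType σ s → C.HasType σ t → C.HasType σ u →
      C.Equiv σ (C.plus σ s t) (C.plus σ t s) ∧
      C.Equiv σ (C.times σ s t) (C.times σ t s) ∧
      C.Equiv σ (C.plus σ s (C.plus σ t u)) (C.plus σ (C.plus σ s t) u) ∧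
      C.Equiv σ (C.times σ s (C.times σ t u)) (C.times σ (C.times σ s t) u) ∧
      C.Equiv σ (C.times σ s (C.plus σ t u))
        (C.plus σ (C.times σ s t) (C.times σ s u)) ∧
      C.Equiv σ (C.plus σ (C.lift σ (C.lit 0)) s) s ∧
      C.Equiv σ (C.times σ (C.lift σ (C.lit 1)) s) s := by
  intro σ s t u _ _ _
  open SemiringAux Expr in
  refine ⟨?_, ?_, ?_, ?_, ?_, ?_, ?_⟩
  · simpa [denote] using master C (add (var 0) (var 1)) (add (var 1) (var 0))
      (fun ν => by simp only [evalE]; ring) σ ![s, t, u]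
  · simpa [denote] using master C (mul (var 0) (var 1)) (mul (var 1) (var 0))
      (fun ν => by simp only [evalE]; ring) σ ![s, t, u]
  · simpa [denote] using master C (add (var 0) (add (var 1) (var 2)))
      (add (add (var 0) (var 1)) (var 2))
      (fun ν => by simp only [evalE]; ring) σ ![s, t, u]
  · simpa [denote] using master C (mul (var 0) (mul (var 1) (var 2)))
      (mul (mul (var 0) (var 1)) (var 2))
      (fun ν => by simp only [evalE]; ring) σ ![s, t, u]
  · simpa [denote] using master C (mul (var 0) (add (var 1) (var 2)))
      (add (mul (var 0) (var 1)) (mul (var 0) (var 2)))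
      (fun ν => by simp only [evalE]; ring) σ ![s, t, u]
  · simpa [denote] using master C (add (num 0) (var 0)) (var 0)
      (fun ν => by simp only [evalE]; ring) σ ![s, t, u]
  · simpa [denote] using master C (mul (num 1) (var 0)) (var 0)
      (fun ν => by simp only [evalE]; ring) σ ![s, t, u]
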